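/- The set of affine critical points of F, namely {(x, y) ∈ ℂ² : (p(x,y), q(x,y)) ≠ (0,0), (q·∂p/∂x − p·∂q/∂x)(x,y) = 0, and (q·∂p/∂y − p·∂q/∂y)(x,y) = 0}, has exactly 3d² elements. -/

import Mathlib

open MvPolynomial

/-- The affine linear form `R_k(x,y,1) = (2d+1-k)x + ky - k(2d+1-k)` as a polynomial
in two variables. -/
noncomputable def R2 (d k : ℕ) : MvPolynomial (Fin 2) ℂ :=
  C (2*(d:ℂ)+1-(k:ℂ)) * X 0 + C (k:ℂ) * X 1 - C ((k:ℂ)*(2*(d:ℂ)+1-(k:ℂ)))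

/-- `p(x,y) = P(x,y,1) = ∏_{k=0}^{d} R_k(x,y,1)`. -/
noncomputable def pPoly (d : ℕ) : MvPolynomial (Fin 2) ℂ :=
  ∏ k ∈ Finset.range (d+1), R2 d k

/-- `q(x,y) = Q(x,y,1) = ∏_{k=d+1}^{2d+1} R_k(x,y,1)`. -/
noncomputable def qPoly (d : ℕ) : MvPolynomial (Fin 2) ℂ :=
  ∏ k ∈ Finset.Icc (d+1) (2*d+1), R2 d k


noncomputable def SS (d : ℕ) : ℂ := 2*(d:ℂ)+1

lemma eval_R2 (d k : ℕ) (x y : ℂ) :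
    eval ![x,y] (R2 d k) = (SS d-(k:ℂ))*x + (k:ℂ)*y - (k:ℂ)*(SS d-(k:ℂ)) := by
  simp [R2, SS]

lemma rk_eq (d k : ℕ) (x y u v : ℂ) (h1 : u + v = SS d + x - y) (h2 : u*v = SS d * x) :
    eval ![x,y] (R2 d k) = ((k:ℂ) - u)*((k:ℂ) - v) := by
  rw [eval_R2]
  linear_combination (k:ℂ)*h1 - h2

lemma pderiv0_R2 (d k : ℕ) : pderiv (0:Fin 2) (R2 d k) = C (SS d-(k:ℂ)) := by
  simp [R2, SS, pderiv_X]

lemma pderiv1_R2 (d k : ℕ) : pderiv (1:Fin 2) (R2 d k) = C (k:ℂ) := by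
  simp [R2, SS, pderiv_X]

lemma eval_pderiv_prod (i : Fin 2) (t : Finset ℕ) (f : ℕ → MvPolynomial (Fin 2) ℂ) (z : Fin 2 → ℂ) :
    eval z (pderiv i (∏ k ∈ t, f k)) =
      ∑ k ∈ t, eval z (pderiv i (f k)) * ∏ j ∈ t.erase k, eval z (f j) := by
  classical
  induction t using Finset.induction_on with
  | empty => simp
  | insert a t' ha ih =>
    rw [Finset.prod_insert ha, pderiv_mul, map_add, map_mul, map_mul, ih,
      Finset.sum_insert ha, Finset.erase_insert ha]
    rw [Finset.mul_sum]
    rw [map_prod]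
    congr 1
    refine Finset.sum_congr rfl fun k hk => ?_
    have hka : k ≠ a := ne_of_mem_of_not_mem hk ha
    rw [Finset.erase_insert_of_ne hka.symm, Finset.prod_insert
      (fun h => ha (Finset.mem_of_mem_erase h))]
    ring

noncomputable def Aset (d : ℕ) : Finset ℕ := Finset.range (d+1)
noncomputable def Bset (d : ℕ) : Finset ℕ := Finset.Icc (d+1) (2*d+1)

noncomputable def gv (d : ℕ) (u : ℂ) : ℂ := ∏ k ∈ Aset d, ((k:ℂ) - u)
noncomputable def hv (d : ℕ) (u : ℂ) : ℂ := ∏ k ∈ Bset d, ((k:ℂ) - u)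
noncomputable def gdv (d : ℕ) (u : ℂ) : ℂ := -∑ k ∈ Aset d, ∏ j ∈ (Aset d).erase k, ((j:ℂ) - u)
noncomputable def hdv (d : ℕ) (u : ℂ) : ℂ := -∑ k ∈ Bset d, ∏ j ∈ (Bset d).erase k, ((j:ℂ) - u)
noncomputable def Wv (d : ℕ) (u : ℂ) : ℂ := gdv d u * hv d u - gv d u * hdv d u
noncomputable def SgS (d : ℕ) (u v : ℂ) : ℂ :=
  ∑ k ∈ Aset d, ∏ j ∈ (Aset d).erase k, (((j:ℂ) - u) * ((j:ℂ) - v))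
noncomputable def ShS (d : ℕ) (u v : ℂ) : ℂ :=
  ∑ k ∈ Bset d, ∏ j ∈ (Bset d).erase k, (((j:ℂ) - u) * ((j:ℂ) - v))

section vals
variable (d : ℕ) {x y u v : ℂ}

lemma eval_pPoly (h1 : u + v = SS d + x - y) (h2 : u*v = SS d * x) :
    eval ![x,y] (pPoly d) = gv d u * gv d v := by
  rw [pPoly, map_prod]
  rw [Finset.prod_congr rfl (fun k _ => rk_eq d k x y u v h1 h2), Finset.prod_mul_distrib]
  rfl

lemma eval_qPoly (h1 : u + v = SS d + x - y) (h2 : u*v = SS d * x) :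
    eval ![x,y] (qPoly d) = hv d u * hv d v := by
  rw [qPoly, map_prod]
  rw [Finset.prod_congr rfl (fun k _ => rk_eq d k x y u v h1 h2), Finset.prod_mul_distrib]
  rfl

lemma C1gen (t : Finset ℕ) (h1 : u + v = SS d + x - y) (h2 : u*v = SS d * x) :
    v * eval ![x,y] (pderiv (0:Fin 2) (∏ k ∈ t, R2 d k))
      - (SS d - v) * eval ![x,y] (pderiv (1:Fin 2) (∏ k ∈ t, R2 d k))
      = SS d * (-∑ k ∈ t, ∏ j ∈ t.erase k, ((j:ℂ) - u)) * ∏ k ∈ t, ((k:ℂ) - v) := by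
  have hr : ∀ j : ℕ, eval ![x,y] (R2 d j) = ((j:ℂ) - u)*((j:ℂ) - v) :=
    fun j => rk_eq d j x y u v h1 h2
  rw [eval_pderiv_prod, eval_pderiv_prod]
  simp only [pderiv0_R2, pderiv1_R2, eval_C, hr]
  rw [Finset.mul_sum, Finset.mul_sum, ← Finset.sum_sub_distrib]
  rw [mul_neg, neg_mul, Finset.mul_sum, Finset.sum_mul, ← Finset.sum_neg_distrib]
  refine Finset.sum_congr rfl fun k hk => ?_
  rw [Finset.prod_mul_distrib,
    ← Finset.mul_prod_erase t (fun j => ((j:ℂ) - v)) hk]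
  ring

lemma C3gen (t : Finset ℕ) (h1 : u + v = SS d + x - y) (h2 : u*v = SS d * x) :
    eval ![x,y] (pderiv (0:Fin 2) (∏ k ∈ t, R2 d k))
      + eval ![x,y] (pderiv (1:Fin 2) (∏ k ∈ t, R2 d k))
      = SS d * ∑ k ∈ t, ∏ j ∈ t.erase k, (((j:ℂ) - u) * ((j:ℂ) - v)) := by
  have hr : ∀ j : ℕ, eval ![x,y] (R2 d j) = ((j:ℂ) - u)*((j:ℂ) - v) :=
    fun j => rk_eq d j x y u v h1 h2
  rw [eval_pderiv_prod, eval_pderiv_prod]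
  simp only [pderiv0_R2, pderiv1_R2, eval_C, hr]
  rw [← Finset.sum_add_distrib, Finset.mul_sum]
  exact Finset.sum_congr rfl fun k hk => by ring

lemma C1p (h1 : u + v = SS d + x - y) (h2 : u*v = SS d * x) :
    v * eval ![x,y] (pderiv (0:Fin 2) (pPoly d)) - (SS d - v) * eval ![x,y] (pderiv (1:Fin 2) (pPoly d))
      = SS d * gdv d u * gv d v :=
  C1gen d (Aset d) h1 h2

lemma C1q (h1 : u + v = SS d + x - y) (h2 : u*v = SS d * x) :
    v * eval ![x,y] (pderiv (0:Fin 2) (qPoly d)) - (SS d - v) * eval ![x,y] (pderiv (1:Fin 2) (qPoly d))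
      = SS d * hdv d u * hv d v :=
  C1gen d (Bset d) h1 h2

lemma C3p (h1 : u + v = SS d + x - y) (h2 : u*v = SS d * x) :
    eval ![x,y] (pderiv (0:Fin 2) (pPoly d)) + eval ![x,y] (pderiv (1:Fin 2) (pPoly d))
      = SS d * SgS d u v :=
  C3gen d (Aset d) h1 h2

lemma C3q (h1 : u + v = SS d + x - y) (h2 : u*v = SS d * x) :
    eval ![x,y] (pderiv (0:Fin 2) (qPoly d)) + eval ![x,y] (pderiv (1:Fin 2) (qPoly d))
      = SS d * ShS d u v :=
  C3gen d (Bset d) h1 h2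

-- the critical-equation values
lemma J1 (h1 : u + v = SS d + x - y) (h2 : u*v = SS d * x) :
    v * eval ![x,y] (qPoly d * pderiv (0:Fin 2) (pPoly d) - pPoly d * pderiv (0:Fin 2) (qPoly d))
      - (SS d - v) * eval ![x,y] (qPoly d * pderiv (1:Fin 2) (pPoly d) - pPoly d * pderiv (1:Fin 2) (qPoly d))
      = SS d * (gv d v * hv d v) * Wv d u := by
  simp only [map_sub, map_mul, eval_pPoly d h1 h2, eval_qPoly d h1 h2]
  have e1 := C1p d h1 h2
  have e2 := C1q d h1 h2
  rw [Wv]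
  linear_combination (hv d u * hv d v) * e1 - (gv d u * gv d v) * e2

lemma J3 (h1 : u + v = SS d + x - y) (h2 : u*v = SS d * x) :
    eval ![x,y] (qPoly d * pderiv (0:Fin 2) (pPoly d) - pPoly d * pderiv (0:Fin 2) (qPoly d))
      + eval ![x,y] (qPoly d * pderiv (1:Fin 2) (pPoly d) - pPoly d * pderiv (1:Fin 2) (qPoly d))
      = SS d * ((hv d u * hv d v) * SgS d u v - (gv d u * gv d v) * ShS d u v) := by
  simp only [map_sub, map_mul, eval_pPoly d h1 h2, eval_qPoly d h1 h2]
  have e1 := C3p d h1 h2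
  have e2 := C3q d h1 h2
  linear_combination (hv d u * hv d v) * e1 - (gv d u * gv d v) * e2

lemma J2 (h1 : u + v = SS d + x - y) (h2 : u*v = SS d * x) :
    u * eval ![x,y] (qPoly d * pderiv (0:Fin 2) (pPoly d) - pPoly d * pderiv (0:Fin 2) (qPoly d))
      - (SS d - u) * eval ![x,y] (qPoly d * pderiv (1:Fin 2) (pPoly d) - pPoly d * pderiv (1:Fin 2) (qPoly d))
      = SS d * (gv d u * hv d u) * Wv d v :=
  J1 d (v := u) (u := v) (by rw [add_comm]; exact h1) (by rw [mul_comm]; exact h2)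

end vals

section intvals
variable {d k l : ℕ}

lemma A_disj_B (hk : k ∈ Aset d) (hl : l ∈ Bset d) : k ≠ l := by
  simp only [Aset, Finset.mem_range] at hk
  simp only [Bset, Finset.mem_Icc] at hl
  omega

lemma cast_ne_of_ne {k l : ℕ} (h : k ≠ l) : (k:ℂ) ≠ (l:ℂ) := by
  exact_mod_cast h

lemma gv_int_zero (hk : k ∈ Aset d) : gv d (k:ℂ) = 0 :=
  Finset.prod_eq_zero hk (by ring)

lemma hv_int_zero (hk : k ∈ Bset d) : hv d (k:ℂ) = 0 :=
  Finset.prod_eq_zero hk (by ring)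

lemma gv_ne_zero_of (u : ℂ) (h : ∀ j ∈ Aset d, (j:ℂ) ≠ u) : gv d u ≠ 0 :=
  Finset.prod_ne_zero_iff.2 fun j hj => sub_ne_zero.2 (h j hj)

lemma hv_ne_zero_of (u : ℂ) (h : ∀ j ∈ Bset d, (j:ℂ) ≠ u) : hv d u ≠ 0 :=
  Finset.prod_ne_zero_iff.2 fun j hj => sub_ne_zero.2 (h j hj)

lemma hv_at_A (hk : k ∈ Aset d) : hv d (k:ℂ) ≠ 0 :=
  hv_ne_zero_of _ fun j hj => cast_ne_of_ne (A_disj_B hk hj).symm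

lemma gv_at_B (hk : k ∈ Bset d) : gv d (k:ℂ) ≠ 0 :=
  gv_ne_zero_of _ fun j hj => cast_ne_of_ne (A_disj_B hj hk)

lemma gv_eq_zero_iff {u : ℂ} : gv d u = 0 ↔ ∃ j ∈ Aset d, u = (j:ℂ) := by
  rw [gv, Finset.prod_eq_zero_iff]
  refine exists_congr fun j => and_congr_right fun _ => ?_
  rw [sub_eq_zero, eq_comm]

lemma hv_eq_zero_iff {u : ℂ} : hv d u = 0 ↔ ∃ j ∈ Bset d, u = (j:ℂ) := by
  rw [hv, Finset.prod_eq_zero_iff]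
  refine exists_congr fun j => and_congr_right fun _ => ?_
  rw [sub_eq_zero, eq_comm]

lemma sum_erase_single {t : Finset ℕ} (hk : k ∈ t) :
    ∑ l ∈ t, ∏ j ∈ t.erase l, ((j:ℂ) - (k:ℂ)) = ∏ j ∈ t.erase k, ((j:ℂ) - (k:ℂ)) := by
  refine Finset.sum_eq_single_of_mem k hk fun l hl hlk => ?_
  exact Finset.prod_eq_zero (Finset.mem_erase.2 ⟨hlk.symm, hk⟩) (by ring)

lemma prod_erase_ne_zero {t : Finset ℕ} (hk : k ∈ t) :
    ∏ j ∈ t.erase k, ((j:ℂ) - (k:ℂ)) ≠ 0 :=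
  Finset.prod_ne_zero_iff.2 fun j hj =>
    sub_ne_zero.2 (cast_ne_of_ne (Finset.mem_erase.1 hj).1)

lemma gdv_at_A (hk : k ∈ Aset d) : gdv d (k:ℂ) ≠ 0 := by
  rw [gdv, sum_erase_single hk, neg_ne_zero]
  exact prod_erase_ne_zero hk

lemma hdv_at_B (hk : k ∈ Bset d) : hdv d (k:ℂ) ≠ 0 := by
  rw [hdv, sum_erase_single hk, neg_ne_zero]
  exact prod_erase_ne_zero hk

lemma SgS_at_A (hk : k ∈ Aset d) : SgS d (k:ℂ) (k:ℂ) ≠ 0 := by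
  rw [SgS]
  have : ∑ l ∈ Aset d, ∏ j ∈ (Aset d).erase l, (((j:ℂ) - (k:ℂ)) * ((j:ℂ) - (k:ℂ)))
      = ∏ j ∈ (Aset d).erase k, (((j:ℂ) - (k:ℂ)) * ((j:ℂ) - (k:ℂ))) := by
    refine Finset.sum_eq_single_of_mem k hk fun l hl hlk => ?_
    exact Finset.prod_eq_zero (Finset.mem_erase.2 ⟨hlk.symm, hk⟩) (by ring)
  rw [this]
  exact Finset.prod_ne_zero_iff.2 fun j hj => mul_ne_zero
    (sub_ne_zero.2 (cast_ne_of_ne (Finset.mem_erase.1 hj).1))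
    (sub_ne_zero.2 (cast_ne_of_ne (Finset.mem_erase.1 hj).1))

lemma ShS_at_B (hk : k ∈ Bset d) : ShS d (k:ℂ) (k:ℂ) ≠ 0 := by
  rw [ShS]
  have : ∑ l ∈ Bset d, ∏ j ∈ (Bset d).erase l, (((j:ℂ) - (k:ℂ)) * ((j:ℂ) - (k:ℂ)))
      = ∏ j ∈ (Bset d).erase k, (((j:ℂ) - (k:ℂ)) * ((j:ℂ) - (k:ℂ))) := by
    refine Finset.sum_eq_single_of_mem k hk fun l hl hlk => ?_
    exact Finset.prod_eq_zero (Finset.mem_erase.2 ⟨hlk.symm, hk⟩) (by ring)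
  rw [this]
  exact Finset.prod_ne_zero_iff.2 fun j hj => mul_ne_zero
    (sub_ne_zero.2 (cast_ne_of_ne (Finset.mem_erase.1 hj).1))
    (sub_ne_zero.2 (cast_ne_of_ne (Finset.mem_erase.1 hj).1))

end intvals

section onePoly
open Polynomial in
lemma derivative_prod_lin {R : Type*} [CommRing R] (t : Finset ℕ) (c : ℕ → R) :
    Polynomial.derivative (∏ k ∈ t, (Polynomial.C (c k) - Polynomial.X)) =
      -∑ k ∈ t, ∏ j ∈ t.erase k, (Polynomial.C (c j) - Polynomial.X) := by
  classical
  induction t using Finset.induction_on with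
  | empty => simp
  | insert a t' ha ih =>
    rw [Finset.prod_insert ha, derivative_mul, ih, Finset.sum_insert ha,
      Finset.erase_insert ha]
    have hins : ∀ k ∈ t', (insert a t').erase k = insert a (t'.erase k) := fun k hk =>
      Finset.erase_insert_of_ne (ne_of_mem_of_not_mem hk ha).symm
    have hsum : ∑ k ∈ t', ∏ j ∈ (insert a t').erase k, (Polynomial.C (c j) - Polynomial.X)
        = ∑ k ∈ t', (Polynomial.C (c a) - Polynomial.X) *
            ∏ j ∈ t'.erase k, (Polynomial.C (c j) - Polynomial.X) := by
      refine Finset.sum_congr rfl fun k hk => ?_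
      rw [hins k hk, Finset.prod_insert (fun h => ha (Finset.mem_of_mem_erase h))]
    rw [hsum]
    simp only [derivative_sub, derivative_C, derivative_X, zero_sub]
    rw [← Finset.mul_sum]
    ring

noncomputable def gC (d : ℕ) : Polynomial ℂ := ∏ k ∈ Aset d, (Polynomial.C (k:ℂ) - Polynomial.X)
noncomputable def hC (d : ℕ) : Polynomial ℂ := ∏ k ∈ Bset d, (Polynomial.C (k:ℂ) - Polynomial.X)
noncomputable def WC (d : ℕ) : Polynomial ℂ :=
  Polynomial.derivative (gC d) * hC d - gC d * Polynomial.derivative (hC d)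
noncomputable def gP (d : ℕ) : Polynomial ℝ := ∏ k ∈ Aset d, (Polynomial.C (k:ℝ) - Polynomial.X)
noncomputable def hP (d : ℕ) : Polynomial ℝ := ∏ k ∈ Bset d, (Polynomial.C (k:ℝ) - Polynomial.X)
noncomputable def WP (d : ℕ) : Polynomial ℝ :=
  Polynomial.derivative (gP d) * hP d - gP d * Polynomial.derivative (hP d)

lemma gC_map (d : ℕ) : (gP d).map (algebraMap ℝ ℂ) = gC d := by
  simp [gP, gC, Polynomial.map_prod]

lemma hC_map (d : ℕ) : (hP d).map (algebraMap ℝ ℂ) = hC d := by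
  simp [hP, hC, Polynomial.map_prod]

lemma WC_map (d : ℕ) : (WP d).map (algebraMap ℝ ℂ) = WC d := by
  simp only [WP, WC, Polynomial.map_sub, Polynomial.map_mul, ← Polynomial.derivative_map,
    gC_map, hC_map]

lemma gv_eval (d : ℕ) (u : ℂ) : gv d u = (gC d).eval u := by
  simp [gv, gC, Polynomial.eval_prod]

lemma hv_eval (d : ℕ) (u : ℂ) : hv d u = (hC d).eval u := by
  simp [hv, hC, Polynomial.eval_prod]

lemma gdv_eval (d : ℕ) (u : ℂ) : gdv d u = (Polynomial.derivative (gC d)).eval u := by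
  rw [gC, derivative_prod_lin]
  simp [gdv, Polynomial.eval_finset_sum, Polynomial.eval_prod]

lemma hdv_eval (d : ℕ) (u : ℂ) : hdv d u = (Polynomial.derivative (hC d)).eval u := by
  rw [hC, derivative_prod_lin]
  simp [hdv, Polynomial.eval_finset_sum, Polynomial.eval_prod]

lemma Wv_eval (d : ℕ) (u : ℂ) : Wv d u = (WC d).eval u := by
  simp [Wv, WC, gv_eval, hv_eval, gdv_eval, hdv_eval]

noncomputable def gddS (d : ℕ) (u : ℂ) : ℂ :=
  ∑ k ∈ Aset d, ∑ l ∈ (Aset d).erase k, ∏ j ∈ ((Aset d).erase k).erase l, ((j:ℂ) - u)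
noncomputable def hddS (d : ℕ) (u : ℂ) : ℂ :=
  ∑ k ∈ Bset d, ∑ l ∈ (Bset d).erase k, ∏ j ∈ ((Bset d).erase k).erase l, ((j:ℂ) - u)

lemma gddS_eval (d : ℕ) (u : ℂ) :
    gddS d u = (Polynomial.derivative (Polynomial.derivative (gC d))).eval u := by
  rw [gC, derivative_prod_lin, map_neg, map_sum,
    Finset.sum_congr rfl fun k _ => derivative_prod_lin ((Aset d).erase k) _]
  simp [gddS, Polynomial.eval_finset_sum, Polynomial.eval_prod]

lemma hddS_eval (d : ℕ) (u : ℂ) :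
    hddS d u = (Polynomial.derivative (Polynomial.derivative (hC d))).eval u := by
  rw [hC, derivative_prod_lin, map_neg, map_sum,
    Finset.sum_congr rfl fun k _ => derivative_prod_lin ((Bset d).erase k) _]
  simp [hddS, Polynomial.eval_finset_sum, Polynomial.eval_prod]

lemma derivWC_eval (d : ℕ) (u : ℂ) :
    (Polynomial.derivative (WC d)).eval u = gddS d u * hv d u - gv d u * hddS d u := by
  have : Polynomial.derivative (WC d) =
      Polynomial.derivative (Polynomial.derivative (gC d)) * hC d
        - gC d * Polynomial.derivative (Polynomial.derivative (hC d)) := by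
    rw [WC, Polynomial.derivative_sub, Polynomial.derivative_mul, Polynomial.derivative_mul]
    ring
  rw [this]
  simp [gddS_eval, hddS_eval, gv_eval, hv_eval]

lemma sq_ident (t : Finset ℕ) (u : ℂ) :
    ∑ k ∈ t, ∏ j ∈ t.erase k, (((j:ℂ) - u) * ((j:ℂ) - u))
      = (∑ k ∈ t, ∏ j ∈ t.erase k, ((j:ℂ) - u))^2
        - (∏ j ∈ t, ((j:ℂ) - u)) *
          (∑ k ∈ t, ∑ l ∈ t.erase k, ∏ j ∈ (t.erase k).erase l, ((j:ℂ) - u)) := by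
  classical
  set f : ℕ → ℂ := fun j => (j:ℂ) - u with hf
  induction t using Finset.induction_on with
  | empty => simp
  | insert a t' ha ih =>
    have hins : ∀ k ∈ t', (insert a t').erase k = insert a (t'.erase k) := fun k hk =>
      Finset.erase_insert_of_ne (ne_of_mem_of_not_mem hk ha).symm
    have hmem : ∀ k ∈ t', a ∉ t'.erase k := fun k _ h => ha (Finset.mem_of_mem_erase h)
    have e1 : ∑ k ∈ insert a t', ∏ j ∈ (insert a t').erase k, (f j * f j)
        = (∏ j ∈ t', (f j * f j)) + (f a * f a) * ∑ k ∈ t', ∏ j ∈ t'.erase k, (f j * f j) := by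
      rw [Finset.sum_insert ha, Finset.erase_insert ha, Finset.mul_sum]
      congr 1
      refine Finset.sum_congr rfl fun k hk => ?_
      rw [hins k hk, Finset.prod_insert (hmem k hk)]
    have e2 : ∑ k ∈ insert a t', ∏ j ∈ (insert a t').erase k, f j
        = (∏ j ∈ t', f j) + f a * ∑ k ∈ t', ∏ j ∈ t'.erase k, f j := by
      rw [Finset.sum_insert ha, Finset.erase_insert ha, Finset.mul_sum]
      congr 1
      refine Finset.sum_congr rfl fun k hk => ?_
      rw [hins k hk, Finset.prod_insert (hmem k hk)]
    have e3 : ∑ k ∈ insert a t', ∑ l ∈ (insert a t').erase k,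
          ∏ j ∈ ((insert a t').erase k).erase l, f j
        = 2 * (∑ k ∈ t', ∏ j ∈ t'.erase k, f j)
          + f a * ∑ k ∈ t', ∑ l ∈ t'.erase k, ∏ j ∈ (t'.erase k).erase l, f j := by
      rw [Finset.sum_insert ha, Finset.erase_insert ha]
      have inner : ∀ k ∈ t', ∑ l ∈ (insert a t').erase k,
            ∏ j ∈ ((insert a t').erase k).erase l, f j
          = (∏ j ∈ t'.erase k, f j)
            + f a * ∑ l ∈ t'.erase k, ∏ j ∈ (t'.erase k).erase l, f j := by
        intro k hk
        rw [hins k hk, Finset.sum_insert (hmem k hk), Finset.erase_insert (hmem k hk),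
          Finset.mul_sum]
        congr 1
        refine Finset.sum_congr rfl fun l hl => ?_
        have hla : a ∉ (t'.erase k).erase l := fun h =>
          hmem k hk (Finset.mem_of_mem_erase h)
        rw [Finset.erase_insert_of_ne (ne_of_mem_of_not_mem hl (hmem k hk)).symm,
          Finset.prod_insert hla]
      rw [Finset.sum_congr rfl inner, Finset.sum_add_distrib, ← Finset.mul_sum]
      ring
    rw [e1, e2, e3, Finset.prod_insert ha, Finset.prod_mul_distrib]
    linear_combination (f a * f a) * ih
end onePoly

lemma SgS_diag (d : ℕ) (u : ℂ) : SgS d u u = (gdv d u)^2 - gv d u * gddS d u := by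
  rw [SgS, sq_ident (Aset d) u, gdv, gv, gddS]
  ring

lemma ShS_diag (d : ℕ) (u : ℂ) : ShS d u u = (hdv d u)^2 - hv d u * hddS d u := by
  rw [ShS, sq_ident (Bset d) u, hdv, hv, hddS]
  ring

lemma diag_key (d : ℕ) (u : ℂ) (hw : Wv d u = 0) :
    hv d u^2 * SgS d u u - gv d u^2 * ShS d u u
      = -(gv d u * hv d u) * (Polynomial.derivative (WC d)).eval u := by
  rw [SgS_diag, ShS_diag, derivWC_eval]
  have hw' : gdv d u * hv d u - gv d u * hdv d u = 0 := hw
  linear_combination (gdv d u * hv d u + gv d u * hdv d u) * hw'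

section rolle
open Set

noncomputable def lowI (d i : ℕ) : ℝ := if i < d then (i:ℝ) else (i:ℝ)+1

lemma eval_gP (d : ℕ) (t : ℝ) : (gP d).eval t = ∏ k ∈ Aset d, ((k:ℝ) - t) := by
  simp [gP, Polynomial.eval_prod]

lemma eval_hP (d : ℕ) (t : ℝ) : (hP d).eval t = ∏ k ∈ Bset d, ((k:ℝ) - t) := by
  simp [hP, Polynomial.eval_prod]

lemma hP_pos (d : ℕ) {t : ℝ} (ht : t ≤ (d:ℝ)) : 0 < (hP d).eval t := by
  rw [eval_hP]
  refine Finset.prod_pos fun k hk => ?_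
  have : (d:ℕ) + 1 ≤ k := (Finset.mem_Icc.1 hk).1
  have : ((d:ℝ)) + 1 ≤ (k:ℝ) := by exact_mod_cast this
  linarith

lemma gP_neg (d : ℕ) {t : ℝ} (ht : (d:ℝ) + 1 ≤ t) : (gP d).eval t ≠ 0 := by
  rw [eval_gP]
  refine Finset.prod_ne_zero_iff.2 fun k hk => ?_
  have : k ≤ d := by simpa [Aset, Nat.lt_succ_iff] using Finset.mem_range.1 hk
  have : (k:ℝ) ≤ (d:ℝ) := by exact_mod_cast this
  intro h
  have : t = (k:ℝ) := by linarith [sub_eq_zero.1 h]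
  linarith

lemma gP_int_zero (d k : ℕ) (hk : k ∈ Aset d) : (gP d).eval (k:ℝ) = 0 := by
  rw [eval_gP]; exact Finset.prod_eq_zero hk (by ring)

lemma hP_int_zero (d k : ℕ) (hk : k ∈ Bset d) : (hP d).eval (k:ℝ) = 0 := by
  rw [eval_hP]; exact Finset.prod_eq_zero hk (by ring)

lemma exists_Wroot (d i : ℕ) (hi : i < 2*d) :
    ∃ c : ℝ, c ∈ Set.Ioo (lowI d i) (lowI d i + 1) ∧ (WP d).eval c = 0 := by
  by_cases hid : i < d
  · -- interval (i, i+1), use g/h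
    have hab : (i:ℝ) < (i:ℝ) + 1 := by linarith
    set F : ℝ → ℝ := fun t => (gP d).eval t / (hP d).eval t with hF
    have hden : ∀ t ∈ Icc (i:ℝ) ((i:ℝ)+1), (hP d).eval t ≠ 0 := by
      intro t ht
      have h1 : t ≤ (d:ℝ) := by
        have : (i:ℝ) + 1 ≤ (d:ℝ) := by exact_mod_cast Nat.succ_le_of_lt hid
        linarith [ht.2]
      exact (hP_pos d h1).ne'
    have hcont : ContinuousOn F (Icc (i:ℝ) ((i:ℝ)+1)) :=
      ((gP d).continuousOn).div ((hP d).continuousOn) hden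
    have hderiv : ∀ t ∈ Ioo (i:ℝ) ((i:ℝ)+1), HasDerivAt F
        ((((gP d).derivative.eval t) * (hP d).eval t -
          (gP d).eval t * ((hP d).derivative.eval t)) / ((hP d).eval t)^2) t := by
      intro t ht
      exact ((gP d).hasDerivAt t).div ((hP d).hasDerivAt t)
        (hden t (Ioo_subset_Icc_self ht))
    have hFa : F (i:ℝ) = F ((i:ℝ)+1) := by
      have h0 : (gP d).eval (i:ℝ) = 0 :=
        gP_int_zero d i (by simp [Aset, Finset.mem_range]; omega)
      have h1 : (gP d).eval ((i:ℝ)+1) = 0 := by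
        have := gP_int_zero d (i+1) (by simp [Aset, Finset.mem_range]; omega)
        push_cast at this ⊢
        exact this
      simp [hF, h0, h1]
    obtain ⟨c, hc, hc0⟩ := exists_hasDerivAt_eq_zero hab hcont hFa hderiv
    refine ⟨c, ?_, ?_⟩
    · simpa [lowI, hid] using hc
    · have hd0 : (hP d).eval c ≠ 0 := hden c (Ioo_subset_Icc_self hc)
      have := div_eq_zero_iff.1 hc0
      rcases this with h | h
      · rw [WP]; simpa using h
      · exact absurd h (pow_ne_zero 2 hd0)
  · -- interval (i+1, i+2), use h/g
    push_neg at hid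
    have hab : (i:ℝ)+1 < (i:ℝ) + 2 := by linarith
    set F : ℝ → ℝ := fun t => (hP d).eval t / (gP d).eval t with hF
    have hden : ∀ t ∈ Icc ((i:ℝ)+1) ((i:ℝ)+2), (gP d).eval t ≠ 0 := by
      intro t ht
      have h1 : (d:ℝ) + 1 ≤ t := by
        have : (d:ℝ) ≤ (i:ℝ) := by exact_mod_cast hid
        linarith [ht.1]
      exact gP_neg d h1
    have hcont : ContinuousOn F (Icc ((i:ℝ)+1) ((i:ℝ)+2)) :=
      ((hP d).continuousOn).div ((gP d).continuousOn) hden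
    have hderiv : ∀ t ∈ Ioo ((i:ℝ)+1) ((i:ℝ)+2), HasDerivAt F
        ((((hP d).derivative.eval t) * (gP d).eval t -
          (hP d).eval t * ((gP d).derivative.eval t)) / ((gP d).eval t)^2) t := by
      intro t ht
      exact ((hP d).hasDerivAt t).div ((gP d).hasDerivAt t)
        (hden t (Ioo_subset_Icc_self ht))
    have hFa : F ((i:ℝ)+1) = F ((i:ℝ)+2) := by
      have h0 : (hP d).eval ((i:ℝ)+1) = 0 := by
        have := hP_int_zero d (i+1) (by simp [Bset, Finset.mem_Icc]; omega)
        push_cast at this ⊢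
        exact this
      have h1 : (hP d).eval ((i:ℝ)+2) = 0 := by
        have := hP_int_zero d (i+2) (by simp [Bset, Finset.mem_Icc]; omega)
        push_cast at this ⊢
        exact this
      simp [hF, h0, h1]
    obtain ⟨c, hc, hc0⟩ := exists_hasDerivAt_eq_zero hab hcont hFa hderiv
    refine ⟨c, ?_, ?_⟩
    · have : lowI d i = (i:ℝ)+1 := by simp [lowI, Nat.not_lt.2 hid]
      rw [this]
      have : (i:ℝ) + 1 + 1 = (i:ℝ) + 2 := by ring
      rw [this]
      simpa using hc
    · have hd0 : (gP d).eval c ≠ 0 := hden c (Ioo_subset_Icc_self hc)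
      have := div_eq_zero_iff.1 hc0
      rcases this with h | h
      · rw [WP]
        simp only [Polynomial.eval_sub, Polynomial.eval_mul]
        linarith [h]
      · exact absurd h (pow_ne_zero 2 hd0)

end rolle

section degree
open Polynomial

lemma natDegree_factor (c : ℝ) : (Polynomial.C c - Polynomial.X).natDegree = 1 := by
  rw [show Polynomial.C c - Polynomial.X = -(Polynomial.X - Polynomial.C c) by ring,
    natDegree_neg, natDegree_X_sub_C]

lemma card_Aset (d : ℕ) : (Aset d).card = d + 1 := by simp [Aset]
lemma card_Bset (d : ℕ) : (Bset d).card = d + 1 := by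
  rw [Bset, Nat.card_Icc]; omega

lemma natDegree_gP (d : ℕ) : (gP d).natDegree ≤ d + 1 := by
  refine (natDegree_prod_le _ _).trans ?_
  rw [Finset.sum_congr rfl fun k (_ : k ∈ Aset d) => natDegree_factor (k:ℝ),
    Finset.sum_const, card_Aset]
  simp

lemma natDegree_hP (d : ℕ) : (hP d).natDegree ≤ d + 1 := by
  refine (natDegree_prod_le _ _).trans ?_
  rw [Finset.sum_congr rfl fun k (_ : k ∈ Bset d) => natDegree_factor (k:ℝ),
    Finset.sum_const, card_Bset]
  simp

lemma natDegree_WP (d : ℕ) : (WP d).natDegree ≤ 2*d := by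
  refine natDegree_le_iff_coeff_eq_zero.2 fun N hN => ?_
  have hg' : (derivative (gP d)).natDegree ≤ d :=
    (natDegree_derivative_le _).trans (by have := natDegree_gP d; omega)
  have hh' : (derivative (hP d)).natDegree ≤ d :=
    (natDegree_derivative_le _).trans (by have := natDegree_hP d; omega)
  rw [WP, Polynomial.coeff_sub]
  rcases eq_or_lt_of_le (Nat.succ_le_of_lt hN) with hN1 | hN1
  · -- N = 2d+1
    have e1 : (derivative (gP d) * hP d).coeff (d + (d+1)) =
        (derivative (gP d)).coeff d * (hP d).coeff (d+1) :=
      Polynomial.coeff_mul_add_eq_of_natDegree_le hg' (natDegree_hP d)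
    have e2 : (gP d * derivative (hP d)).coeff ((d+1) + d) =
        (gP d).coeff (d+1) * (derivative (hP d)).coeff d :=
      Polynomial.coeff_mul_add_eq_of_natDegree_le (natDegree_gP d) hh'
    have hNe : N = 2*d+1 := by omega
    rw [hNe, show 2*d+1 = d + (d+1) by omega] at *
    rw [e1, show d + (d+1) = (d+1) + d by omega, e2]
    rw [Polynomial.coeff_derivative, Polynomial.coeff_derivative]
    push_cast
    ring
  · -- N > 2d+1
    have b1 : (derivative (gP d) * hP d).natDegree < N := by
      have h1 : (derivative (gP d) * hP d).natDegree ≤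
          (derivative (gP d)).natDegree + (hP d).natDegree := natDegree_mul_le
      have h2 := natDegree_hP d
      omega
    have b2 : (gP d * derivative (hP d)).natDegree < N := by
      have h1 : (gP d * derivative (hP d)).natDegree ≤
          (gP d).natDegree + (derivative (hP d)).natDegree := natDegree_mul_le
      have h2 := natDegree_gP d
      omega
    rw [Polynomial.coeff_eq_zero_of_natDegree_lt b1,
      Polynomial.coeff_eq_zero_of_natDegree_lt b2, sub_zero]
end degree

section Wstruct
open Polynomial

lemma derivative_prod_lin' {R ι : Type*} [CommRing R] [DecidableEq ι] (t : Finset ι) (c : ι → R) :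
    Polynomial.derivative (∏ k ∈ t, (Polynomial.X - Polynomial.C (c k))) =
      ∑ k ∈ t, ∏ j ∈ t.erase k, (Polynomial.X - Polynomial.C (c j)) := by
  induction t using Finset.induction_on with
  | empty => simp
  | insert a t' ha ih =>
    rw [Finset.prod_insert ha, derivative_mul, ih, Finset.sum_insert ha,
      Finset.erase_insert ha]
    have hins : ∀ k ∈ t', (insert a t').erase k = insert a (t'.erase k) := fun k hk =>
      Finset.erase_insert_of_ne (ne_of_mem_of_not_mem hk ha).symm
    have hsum : ∑ k ∈ t', ∏ j ∈ (insert a t').erase k, (Polynomial.X - Polynomial.C (c j))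
        = ∑ k ∈ t', (Polynomial.X - Polynomial.C (c a)) *
            ∏ j ∈ t'.erase k, (Polynomial.X - Polynomial.C (c j)) := by
      refine Finset.sum_congr rfl fun k hk => ?_
      rw [hins k hk, Finset.prod_insert (fun h => ha (Finset.mem_of_mem_erase h))]
    rw [hsum]
    simp only [derivative_sub, derivative_C, derivative_X, sub_zero]
    rw [← Finset.mul_sum]
    ring

lemma WP_ne_zero (d : ℕ) : WP d ≠ 0 := by
  have h0A : (0:ℕ) ∈ Aset d := by simp [Aset]
  have hW0 : Wv d 0 ≠ 0 := by
    have : Wv d 0 = gdv d 0 * hv d 0 := by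
      rw [Wv]
      have : gv d ((0:ℕ):ℂ) = 0 := gv_int_zero h0A
      simp only [Nat.cast_zero] at this
      rw [this]; ring
    rw [this]
    have h1 := gdv_at_A (d := d) h0A
    have h2 := hv_at_A (d := d) h0A
    simp only [Nat.cast_zero] at h1 h2
    exact mul_ne_zero h1 h2
  intro h
  apply hW0
  rw [Wv_eval, ← WC_map, h]
  simp

lemma W_package (d : ℕ) : ∃ T : Finset ℝ, T.card = 2*d ∧
    (∀ r ∈ T, ∀ k : ℕ, k ≤ 2*d+1 → (k:ℝ) ≠ r) ∧
    (∀ u : ℂ, Wv d u = 0 ↔ ∃ r ∈ T, u = ((r:ℝ):ℂ)) ∧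
    (∀ r ∈ T, (Polynomial.derivative (WC d)).eval ((r:ℝ):ℂ) ≠ 0) := by
  classical
  -- choose the 2d roots
  have hex : ∀ i : ℕ, i < 2*d →
      ∃ c : ℝ, c ∈ Set.Ioo (lowI d i) (lowI d i + 1) ∧ (WP d).eval c = 0 :=
    fun i hi => exists_Wroot d i hi
  choose! c hc1 hc2 using hex
  -- basic interval facts
  have hlow : ∀ i, i < 2*d → ∃ L : ℕ, L ≤ 2*d ∧ lowI d i = (L:ℝ) := by
    intro i hi
    by_cases hid : i < d
    · exact ⟨i, by omega, by simp [lowI, hid]⟩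
    · exact ⟨i+1, by omega, by push_cast [lowI, hid]; simp⟩
  have hmono : ∀ i j, i < j → j < 2*d → c i < c j := by
    intro i j hij hj
    have hi : i < 2*d := by omega
    have h1 := hc1 i hi
    have h2 := hc1 j hj
    have : lowI d i + 1 ≤ lowI d j := by
      by_cases hid : i < d <;> by_cases hjd : j < d <;>
        simp only [lowI, if_pos, if_neg, hid, hjd, if_true, if_false] <;>
        [skip; skip; omega; skip]
      · have : (i:ℝ) + 1 ≤ (j:ℝ) := by exact_mod_cast hij
        linarith
      · have : (i:ℝ) + 1 ≤ (j:ℝ) + 1 := by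
          have : (i:ℝ) ≤ (j:ℝ) := by exact_mod_cast le_of_lt hij
          linarith
        linarith
      · have : (i:ℝ) + 1 + 1 ≤ (j:ℝ) + 1 := by
          have : (i:ℝ) + 1 ≤ (j:ℝ) := by exact_mod_cast hij
          linarith
        linarith
    linarith [h1.2, h2.1]
  have hinj : Set.InjOn c (Finset.range (2*d)) := by
    intro i hi j hj hij
    simp only [Finset.coe_range, Set.mem_Iio] at hi hj
    rcases lt_trichotomy i j with h | h | h
    · exact absurd hij (ne_of_lt (hmono i j h hj))
    · exact h
    · exact absurd hij.symm (ne_of_lt (hmono j i h hi))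
  set T : Finset ℝ := (Finset.range (2*d)).image c with hT
  have hcardT : T.card = 2*d := by
    rw [hT, Finset.card_image_of_injOn hinj, Finset.card_range]
  -- non-integrality
  have hnint : ∀ r ∈ T, ∀ k : ℕ, k ≤ 2*d+1 → (k:ℝ) ≠ r := by
    intro r hr k _
    rw [hT, Finset.mem_image] at hr
    obtain ⟨i, hi, rfl⟩ := hr
    rw [Finset.mem_range] at hi
    obtain ⟨L, _, hL⟩ := hlow i hi
    have h1 := hc1 i hi
    rw [hL] at h1
    intro hk
    have hLk : (L:ℝ) < (k:ℝ) := by rw [hk]; exact h1.1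
    have hkL : (k:ℝ) < (L:ℝ) + 1 := by rw [hk]; exact h1.2
    have : L < k := by exact_mod_cast hLk
    have : k < L + 1 := by exact_mod_cast hkL
    omega
  -- roots facts
  have hroots : ∀ r ∈ T, r ∈ (WP d).roots := by
    intro r hr
    rw [hT, Finset.mem_image] at hr
    obtain ⟨i, hi, rfl⟩ := hr
    rw [Finset.mem_range] at hi
    exact (Polynomial.mem_roots (WP_ne_zero d)).2 (hc2 i hi)
  have hTsub : T ⊆ (WP d).roots.toFinset := fun r hr =>
    Multiset.mem_toFinset.2 (hroots r hr)
  have hcard_le : Multiset.card (WP d).roots ≤ 2*d :=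
    (Polynomial.card_roots' _).trans (natDegree_WP d)
  have hcard_ge : 2*d ≤ (WP d).roots.toFinset.card := by
    rw [← hcardT]; exact Finset.card_le_card hTsub
  have htf_le : (WP d).roots.toFinset.card ≤ Multiset.card (WP d).roots :=
    Multiset.toFinset_card_le _
  have hTeq : T = (WP d).roots.toFinset :=
    Finset.eq_of_subset_of_card_le hTsub (by omega)
  have hnodup : (WP d).roots.Nodup :=
    Multiset.toFinset_card_eq_card_iff_nodup.1 (by omega)
  have hvalT : T.val = (WP d).roots := by
    rw [hTeq]
    exact Multiset.dedup_eq_self.2 hnodup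
  -- factorization
  obtain ⟨q, hq⟩ := Polynomial.prod_multiset_X_sub_C_dvd (WP d)
  have hM : ((WP d).roots.map fun a => Polynomial.X - Polynomial.C a).prod
      = ∏ r ∈ T, (Polynomial.X - Polynomial.C r) := by
    rw [Finset.prod_eq_multiset_prod, hvalT]
  have hMmonic : (∏ r ∈ T, (Polynomial.X - Polynomial.C r)).Monic :=
    Polynomial.monic_prod_of_monic _ _ fun r _ => Polynomial.monic_X_sub_C r
  have hMdeg : (∏ r ∈ T, (Polynomial.X - Polynomial.C r)).natDegree = 2*d := by
    rw [Polynomial.natDegree_prod _ _ fun r _ => (Polynomial.monic_X_sub_C r).ne_zero]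
    rw [Finset.sum_congr rfl fun r (_ : r ∈ T) => Polynomial.natDegree_X_sub_C r,
      Finset.sum_const, hcardT, smul_eq_mul, mul_one]
  rw [hM] at hq
  have hqne : q ≠ 0 := by
    intro h; exact WP_ne_zero d (by rw [hq, h, mul_zero])
  have hqdeg : q.natDegree = 0 := by
    have := natDegree_WP d
    rw [hq, Polynomial.natDegree_mul hMmonic.ne_zero hqne, hMdeg] at this
    omega
  have hqC : q = Polynomial.C (q.coeff 0) := Polynomial.eq_C_of_natDegree_eq_zero hqdeg
  set cc := q.coeff 0 with hcc
  have hccne : cc ≠ 0 := fun h => hqne (by rw [hqC, h, map_zero])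
  have hWPfact : WP d = Polynomial.C cc * ∏ r ∈ T, (Polynomial.X - Polynomial.C r) := by
    rw [hq, hqC]; ring
  have hWCfact : WC d = Polynomial.C ((cc:ℝ):ℂ) * ∏ r ∈ T, (Polynomial.X - Polynomial.C ((r:ℝ):ℂ)) := by
    rw [← WC_map, hWPfact]
    rw [Polynomial.map_mul, Polynomial.map_C, Polynomial.map_prod]
    simp only [Polynomial.map_sub, Polynomial.map_X, Polynomial.map_C]
    rfl
  refine ⟨T, hcardT, hnint, ?_, ?_⟩
  · intro u
    rw [Wv_eval, hWCfact]
    rw [Polynomial.eval_mul, Polynomial.eval_C, Polynomial.eval_prod]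
    constructor
    · intro h
      rcases mul_eq_zero.1 h with h | h
      · exact absurd h (by exact_mod_cast hccne)
      · obtain ⟨r, hr, hr0⟩ := Finset.prod_eq_zero_iff.1 h
        refine ⟨r, hr, ?_⟩
        have : u - ((r:ℝ):ℂ) = 0 := by simpa using hr0
        exact sub_eq_zero.1 this
    · rintro ⟨r, hr, rfl⟩
      apply mul_eq_zero_of_right
      exact Finset.prod_eq_zero hr (by simp)
  · intro r hr
    rw [hWCfact, Polynomial.derivative_C_mul, Polynomial.eval_mul, Polynomial.eval_C,
      derivative_prod_lin', Polynomial.eval_finset_sum]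
    have hsingle : ∑ k ∈ T, Polynomial.eval ((r:ℝ):ℂ)
          (∏ j ∈ T.erase k, (Polynomial.X - Polynomial.C ((j:ℝ):ℂ)))
        = Polynomial.eval ((r:ℝ):ℂ) (∏ j ∈ T.erase r, (Polynomial.X - Polynomial.C ((j:ℝ):ℂ))) := by
      refine Finset.sum_eq_single_of_mem r hr fun k hk hkr => ?_
      rw [Polynomial.eval_prod]
      exact Finset.prod_eq_zero (Finset.mem_erase.2 ⟨hkr.symm, hr⟩) (by simp)
    rw [hsingle, Polynomial.eval_prod]
    apply mul_ne_zero (by exact_mod_cast hccne)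
    refine Finset.prod_ne_zero_iff.2 fun j hj => ?_
    simp only [Polynomial.eval_sub, Polynomial.eval_X, Polynomial.eval_C]
    rw [sub_ne_zero]
    have hjr : j ≠ r := (Finset.mem_erase.1 hj).1
    intro h
    exact hjr (Complex.ofReal_injective h).symm

end Wstruct

section counting

noncomputable def pairsLT (T : Finset ℝ) : Finset (ℝ × ℝ) :=
  (T ×ˢ T).filter fun z => z.1 < z.2

lemma mem_pairsLT {T : Finset ℝ} {z : ℝ × ℝ} :
    z ∈ pairsLT T ↔ z.1 ∈ T ∧ z.2 ∈ T ∧ z.1 < z.2 := by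
  simp [pairsLT, Finset.mem_filter, Finset.mem_product, and_assoc]

lemma two_mul_card_pairsLT (T : Finset ℝ) :
    2 * (pairsLT T).card = T.card * (T.card - 1) := by
  classical
  set GT : Finset (ℝ × ℝ) := (T ×ˢ T).filter (fun z => z.2 < z.1) with hGT
  have hcardeq : (pairsLT T).card = GT.card := by
    refine Finset.card_bij (fun z _ => z.swap) ?_ ?_ ?_
    · intro z hz
      rw [mem_pairsLT] at hz
      simp [hGT, Finset.mem_filter, Finset.mem_product, hz.1, hz.2.1, hz.2.2]
    · intro a ha b hb hab
      exact Prod.swap_injective hab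
    · intro z hz
      simp only [hGT, Finset.mem_filter, Finset.mem_product] at hz
      exact ⟨z.swap, mem_pairsLT.2 ⟨hz.1.2, hz.1.1, hz.2⟩, by simp⟩
  have hdisj : Disjoint (pairsLT T) GT := by
    rw [Finset.disjoint_left]
    intro z hz hz'
    rw [mem_pairsLT] at hz
    simp only [hGT, Finset.mem_filter] at hz'
    exact absurd hz.2.2 (not_lt.2 (le_of_lt hz'.2))
  have hunion : pairsLT T ∪ GT = T.offDiag := by
    ext z
    rw [Finset.mem_union, mem_pairsLT, Finset.mem_offDiag]
    simp only [hGT, Finset.mem_filter, Finset.mem_product]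
    constructor
    · rintro (⟨h1, h2, h3⟩ | ⟨⟨h1, h2⟩, h3⟩)
      · exact ⟨h1, h2, ne_of_lt h3⟩
      · exact ⟨h1, h2, (ne_of_lt h3).symm⟩
    · rintro ⟨h1, h2, h3⟩
      rcases lt_or_gt_of_ne h3 with h | h
      · exact Or.inl ⟨h1, h2, h⟩
      · exact Or.inr ⟨⟨h1, h2⟩, h⟩
  have := Finset.card_union_of_disjoint hdisj
  rw [hunion, Finset.offDiag_card, ← hcardeq] at this
  have hmul : T.card * (T.card - 1) = T.card * T.card - T.card := by
    rw [Nat.mul_sub, mul_one]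
  omega

noncomputable def mmap (d : ℕ) : ℝ × ℝ → ℂ × ℂ := fun z =>
  ((z.1:ℂ) * (z.2:ℂ) / SS d,
    SS d + (z.1:ℂ) * (z.2:ℂ) / SS d - (z.1:ℂ) - (z.2:ℂ))

lemma SS_ne (d : ℕ) : SS d ≠ 0 := by
  have h : SS d = ((2*d+1:ℕ):ℂ) := by rw [SS]; push_cast; ring
  rw [h]
  exact_mod_cast Nat.succ_ne_zero (2*d)

lemma mmap_inj (d : ℕ) {z w : ℝ × ℝ} (hz : z.1 < z.2) (hw : w.1 < w.2)
    (h : mmap d z = mmap d w) : z = w := by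
  obtain ⟨h1, h2⟩ := Prod.ext_iff.1 h
  simp only [mmap] at h1 h2
  have hprod : z.1 * z.2 = w.1 * w.2 := by
    have hc : (z.1:ℂ)*(z.2:ℂ) = (w.1:ℂ)*(w.2:ℂ) := by
      field_simp [SS_ne d] at h1
      exact h1
    exact_mod_cast hc
  have hsum : z.1 + z.2 = w.1 + w.2 := by
    have hc : (z.1:ℂ) + z.2 = (w.1:ℂ) + w.2 := by
      have := h2
      rw [h1] at this
      have h3 : (z.1:ℂ) + (z.2:ℂ) = (w.1:ℂ) + (w.2:ℂ) := by linear_combination -this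
      exact h3
    exact_mod_cast hc
  have hq : (z.1 - w.1) * (z.1 - w.2) = 0 := by
    have : z.1*z.1 - z.1*(w.1+w.2) + w.1*w.2 = 0 := by
      rw [← hsum, ← hprod]; ring
    linear_combination this
  rcases mul_eq_zero.1 hq with h0 | h0
  · have e1 : z.1 = w.1 := by linarith [sub_eq_zero.1 h0]
    have e2 : z.2 = w.2 := by
      have := hsum; rw [e1] at this; linarith
    exact Prod.ext e1 e2
  · have e1 : z.1 = w.2 := sub_eq_zero.1 h0
    have e2 : z.2 = w.1 := by rw [e1] at hsum; linarith
    exfalso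
    rw [e1] at hz; rw [← e2] at hw
    exact absurd (hz.trans hw) (lt_irrefl _)

end counting


/-- The set of affine critical points of `F = p/q` (points outside the indeterminacy
set `{p = q = 0}` where both components of `q∇p - p∇q` vanish) has exactly `3d²`
elements. -/
theorem stmt5 (d : ℕ) (hd : 1 ≤ d) :
    {v : ℂ × ℂ |
      ¬(eval ![v.1, v.2] (pPoly d) = 0 ∧ eval ![v.1, v.2] (qPoly d) = 0) ∧
      eval ![v.1, v.2] (qPoly d * pderiv 0 (pPoly d) - pPoly d * pderiv 0 (qPoly d)) = 0 ∧
      eval ![v.1, v.2] (qPoly d * pderiv 1 (pPoly d) - pPoly d * pderiv 1 (qPoly d)) = 0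
      }.ncard = 3*d^2 := by
  classical
  obtain ⟨T, hTcard, hTnint, hTiff, hTder⟩ := W_package d
  set GA : Finset ℝ := (Aset d).image (fun k : ℕ => (k:ℝ)) with hGA
  set GB : Finset ℝ := (Bset d).image (fun k : ℕ => (k:ℝ)) with hGB
  set TAll : Finset (ℝ×ℝ) := pairsLT GA ∪ pairsLT GB ∪ pairsLT T with hTAll
  set Simg : Finset (ℂ × ℂ) := TAll.image (mmap d) with hSimg
  have castinj : Function.Injective (fun k : ℕ => (k:ℝ)) := fun a b h => Nat.cast_injective h
  have hGAcard : GA.card = d + 1 := by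
    rw [hGA, Finset.card_image_of_injective _ castinj, card_Aset]
  have hGBcard : GB.card = d + 1 := by
    rw [hGB, Finset.card_image_of_injective _ castinj, card_Bset]
  -- elements of TAll are increasing pairs
  have hTAll_lt : ∀ z ∈ TAll, z.1 < z.2 := by
    intro z hz
    rw [hTAll, Finset.mem_union, Finset.mem_union] at hz
    rcases hz with (hz | hz) | hz <;> exact (mem_pairsLT.1 hz).2.2
  -- disjointness
  have hGAB : ∀ r : ℝ, r ∈ GA → r ∈ GB → False := by
    intro r h1 h2
    rw [hGA, Finset.mem_image] at h1
    rw [hGB, Finset.mem_image] at h2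
    obtain ⟨k1, hk1, rfl⟩ := h1
    obtain ⟨k2, hk2, he⟩ := h2
    exact A_disj_B hk1 hk2 (castinj he).symm
  have hGT : ∀ r : ℝ, r ∈ GA ∪ GB → r ∈ T → False := by
    intro r h1 h2
    rw [Finset.mem_union] at h1
    rcases h1 with h1 | h1
    · rw [hGA, Finset.mem_image] at h1
      obtain ⟨k, hk, rfl⟩ := h1
      have : k ≤ 2*d+1 := by
        have : k ≤ d := (by simpa [Aset] using hk); omega
      exact hTnint _ h2 k this rfl
    · rw [hGB, Finset.mem_image] at h1
      obtain ⟨k, hk, rfl⟩ := h1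
      have : k ≤ 2*d+1 := (by simpa [Bset] using hk : d < k ∧ k ≤ 2*d+1).2
      exact hTnint _ h2 k this rfl
  -- cardinality of TAll
  have hdisj1 : Disjoint (pairsLT GA) (pairsLT GB) := by
    rw [Finset.disjoint_left]
    intro z h1 h2
    exact hGAB z.1 (mem_pairsLT.1 h1).1 (mem_pairsLT.1 h2).1
  have hdisj2 : Disjoint (pairsLT GA ∪ pairsLT GB) (pairsLT T) := by
    rw [Finset.disjoint_left]
    intro z h1 h2
    rw [Finset.mem_union] at h1
    rcases h1 with h1 | h1
    · exact hGT z.1 (Finset.mem_union_left _ (mem_pairsLT.1 h1).1) (mem_pairsLT.1 h2).1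
    · exact hGT z.1 (Finset.mem_union_right _ (mem_pairsLT.1 h1).1) (mem_pairsLT.1 h2).1
  have hTAllcard : TAll.card = 3*d^2 := by
    have h1 : TAll.card = (pairsLT GA).card + (pairsLT GB).card + (pairsLT T).card := by
      rw [hTAll, Finset.card_union_of_disjoint hdisj2, Finset.card_union_of_disjoint hdisj1]
    have e1 := two_mul_card_pairsLT GA
    have e2 := two_mul_card_pairsLT GB
    have e3 := two_mul_card_pairsLT T
    rw [hGAcard] at e1
    rw [hGBcard] at e2
    rw [hTcard] at e3
    have : 2 * TAll.card = 2 * (3*d^2) := by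
      rw [h1, mul_add, mul_add, e1, e2, e3]
      zify [show (1:ℕ) ≤ d+1 by omega, show (1:ℕ) ≤ 2*d by omega]
      ring
    omega
  
  have hScard : Simg.card = 3*d^2 := by
    rw [hSimg, Finset.card_image_of_injOn (fun z hz w hw h =>
      mmap_inj d (hTAll_lt z hz) (hTAll_lt w hw) h), hTAllcard]
  -- nonvanishing of gv, hv at roots of W
  have hgvT : ∀ r ∈ T, gv d ((r:ℝ):ℂ) ≠ 0 := by
    intro r hr
    refine gv_ne_zero_of _ fun j hj => ?_
    have hj' : j ≤ 2*d+1 := by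
      have : j ≤ d := (by simpa [Aset] using hj); omega
    intro h
    refine hTnint r hr j hj' ?_
    have h' : ((j:ℝ):ℂ) = ((r:ℝ):ℂ) := by rw [← h]; simp
    exact Complex.ofReal_injective h'
  have hhvT : ∀ r ∈ T, hv d ((r:ℝ):ℂ) ≠ 0 := by
    intro r hr
    refine hv_ne_zero_of _ fun j hj => ?_
    have hj' : j ≤ 2*d+1 := (by simpa [Bset] using hj : d < j ∧ j ≤ 2*d+1).2
    intro h
    refine hTnint r hr j hj' ?_
    have h' : ((j:ℝ):ℂ) = ((r:ℝ):ℂ) := by rw [← h]; simp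
    exact Complex.ofReal_injective h'
  -- membership helper
  have mem_helper : ∀ (x y : ℂ) (T0 : Finset ℝ), pairsLT T0 ⊆ TAll →
      ∀ r1 r2 : ℝ, r1 ∈ T0 → r2 ∈ T0 → r1 ≠ r2 →
      ((r1:ℂ) + (r2:ℂ) = SS d + x - y) → ((r1:ℂ) * (r2:ℂ) = SS d * x) →
      (x, y) ∈ Simg := by
    intro x y T0 hsub r1 r2 h1m h2m hne h1 h2
    rcases hne.lt_or_gt with hlt | hlt
    · refine Finset.mem_image.2 ⟨(r1, r2), hsub (mem_pairsLT.2 ⟨h1m, h2m, hlt⟩), ?_⟩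
      have hx : ((r1:ℝ):ℂ) * ((r2:ℝ):ℂ) / SS d = x := by
        rw [h2, mul_div_cancel_left₀ _ (SS_ne d)]
      refine Prod.ext hx ?_
      show SS d + ((r1:ℝ):ℂ) * ((r2:ℝ):ℂ) / SS d - r1 - r2 = y
      rw [hx]
      linear_combination -h1
    · refine Finset.mem_image.2 ⟨(r2, r1), hsub (mem_pairsLT.2 ⟨h2m, h1m, hlt⟩), ?_⟩
      have hx : ((r2:ℝ):ℂ) * ((r1:ℝ):ℂ) / SS d = x := by
        rw [mul_comm, h2, mul_div_cancel_left₀ _ (SS_ne d)]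
      refine Prod.ext hx ?_
      show SS d + ((r2:ℝ):ℂ) * ((r1:ℝ):ℂ) / SS d - r2 - r1 = y
      rw [hx]
      linear_combination -h1
  have hsubGA : pairsLT GA ⊆ TAll := by
    rw [hTAll]; exact (Finset.subset_union_left).trans Finset.subset_union_left
  have hsubGB : pairsLT GB ⊆ TAll := by
    rw [hTAll]; exact (Finset.subset_union_right).trans Finset.subset_union_left
  have hsubT : pairsLT T ⊆ TAll := by
    rw [hTAll]; exact Finset.subset_union_right
  -- the set equality
  have hseteq : {v : ℂ × ℂ |
      ¬(eval ![v.1, v.2] (pPoly d) = 0 ∧ eval ![v.1, v.2] (qPoly d) = 0) ∧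
      eval ![v.1, v.2] (qPoly d * pderiv 0 (pPoly d) - pPoly d * pderiv 0 (qPoly d)) = 0 ∧
      eval ![v.1, v.2] (qPoly d * pderiv 1 (pPoly d) - pPoly d * pderiv 1 (qPoly d)) = 0
      } = (Simg : Set (ℂ × ℂ)) := by
    ext z
    obtain ⟨x, y⟩ := z
    simp only [Set.mem_setOf_eq, Finset.mem_coe]
    constructor
    · rintro ⟨hPQ, hA, hB⟩
      -- produce the two "roots" u, v
      obtain ⟨w, hw⟩ := IsAlgClosed.exists_pow_nat_eq
        ((SS d + x - y)^2 - 4*(SS d * x)) (n := 2) (by norm_num)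
      set u : ℂ := ((SS d + x - y) + w)/2 with hu
      set v : ℂ := ((SS d + x - y) - w)/2 with hv'
      have h1 : u + v = SS d + x - y := by rw [hu, hv']; ring
      have h2 : u * v = SS d * x := by
        rw [hu, hv']
        linear_combination (-(1:ℂ)/4) * hw
      have hp := eval_pPoly d h1 h2
      have hq := eval_qPoly d h1 h2
      have hJ1 : gv d v * hv d v * Wv d u = 0 := by
        have hj := J1 d h1 h2
        rw [hA, hB] at hj
        have : SS d * (gv d v * hv d v * Wv d u) = 0 := by linear_combination -hj
        exact (mul_eq_zero.1 this).resolve_left (SS_ne d)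
      have hJ2 : gv d u * hv d u * Wv d v = 0 := by
        have hj := J2 d h1 h2
        rw [hA, hB] at hj
        have : SS d * (gv d u * hv d u * Wv d v) = 0 := by linear_combination -hj
        exact (mul_eq_zero.1 this).resolve_left (SS_ne d)
      have hE : hv d u * hv d v * SgS d u v - gv d u * gv d v * ShS d u v = 0 := by
        have hj := J3 d h1 h2
        rw [hA, hB] at hj
        have : SS d * (hv d u * hv d v * SgS d u v - gv d u * gv d v * ShS d u v) = 0 := by
          linear_combination -hj
        exact (mul_eq_zero.1 this).resolve_left (SS_ne d)
      by_cases huv : u = v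
      · -- diagonal: impossible
        exfalso
        rw [← huv] at hJ2 hE hp hq
        rcases mul_eq_zero.1 hJ2 with hgh | hW
        · rcases mul_eq_zero.1 hgh with hg | hh
          · obtain ⟨k, hk, huk⟩ := gv_eq_zero_iff.1 hg
            rw [huk] at hE hg
            have hhne := hv_at_A hk
            have hSg := SgS_at_A hk
            have : hv d (k:ℂ) * hv d (k:ℂ) * SgS d (k:ℂ) (k:ℂ) = 0 := by
              rw [hg] at hE
              linear_combination hE
            rcases mul_eq_zero.1 this with h | h
            · exact (mul_ne_zero hhne hhne) h
            · exact hSg h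
          · obtain ⟨k, hk, huk⟩ := hv_eq_zero_iff.1 hh
            rw [huk] at hE hh
            have hgne := gv_at_B hk
            have hSh := ShS_at_B hk
            have : gv d (k:ℂ) * gv d (k:ℂ) * ShS d (k:ℂ) (k:ℂ) = 0 := by
              rw [hh] at hE
              linear_combination -hE
            rcases mul_eq_zero.1 this with h | h
            · exact (mul_ne_zero hgne hgne) h
            · exact hSh h
        · -- u is a root of W
          obtain ⟨r, hr, hur⟩ := (hTiff u).1 hW
          have hgne := hgvT r hr
          have hhne := hhvT r hr
          rw [hur] at hE hW
          have hdk := diag_key d _ hW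
          have h0 : -(gv d ((r:ℝ):ℂ) * hv d ((r:ℝ):ℂ)) *
              (Polynomial.derivative (WC d)).eval ((r:ℝ):ℂ) = 0 := by
            rw [← hdk]
            linear_combination hE
          have hne0 : -(gv d ((r:ℝ):ℂ) * hv d ((r:ℝ):ℂ)) *
              (Polynomial.derivative (WC d)).eval ((r:ℝ):ℂ) ≠ 0 := by
            apply mul_ne_zero
            · simpa using mul_ne_zero hgne hhne
            · exact hTder r hr
          exact hne0 h0
      · -- off-diagonal
        rcases mul_eq_zero.1 hJ1 with hgh1 | hW1
        · rcases mul_eq_zero.1 hgh1 with hg1 | hh1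
          · -- gv v = 0
            rcases mul_eq_zero.1 hJ2 with hgh2 | hW2
            · rcases mul_eq_zero.1 hgh2 with hg2 | hh2
              · -- both roots of g : GA pair
                obtain ⟨k1, hk1, hu1⟩ := gv_eq_zero_iff.1 hg2
                obtain ⟨k2, hk2, hv2⟩ := gv_eq_zero_iff.1 hg1
                refine mem_helper x y GA hsubGA (k1:ℝ) (k2:ℝ)
                  (Finset.mem_image.2 ⟨k1, hk1, rfl⟩) (Finset.mem_image.2 ⟨k2, hk2, rfl⟩)
                  ?_ ?_ ?_
                · intro h
                  exact huv (by rw [hu1, hv2, castinj h])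
                · push_cast
                  rw [← hu1, ← hv2]; exact h1
                · push_cast
                  rw [← hu1, ← hv2]; exact h2
              · -- gv v = 0, hv u = 0 : excluded
                exact absurd ⟨by rw [hp, hg1, mul_zero], by rw [hq, hh2, zero_mul]⟩ hPQ
            · -- gv v = 0 and Wv v = 0 : impossible
              obtain ⟨k, hk, hvk⟩ := gv_eq_zero_iff.1 hg1
              rw [hvk] at hW2 hg1
              have : Wv d (k:ℂ) = gdv d (k:ℂ) * hv d (k:ℂ) := by
                rw [Wv, hg1]; ring
              rw [this] at hW2
              exact absurd hW2 (mul_ne_zero (gdv_at_A hk) (hv_at_A hk))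
          · -- hv v = 0
            rcases mul_eq_zero.1 hJ2 with hgh2 | hW2
            · rcases mul_eq_zero.1 hgh2 with hg2 | hh2
              · -- hv v = 0, gv u = 0 : excluded
                exact absurd ⟨by rw [hp, hg2, zero_mul], by rw [hq, hh1, mul_zero]⟩ hPQ
              · -- both roots of h : GB pair
                obtain ⟨k1, hk1, hu1⟩ := hv_eq_zero_iff.1 hh2
                obtain ⟨k2, hk2, hv2⟩ := hv_eq_zero_iff.1 hh1
                refine mem_helper x y GB hsubGB (k1:ℝ) (k2:ℝ)
                  (Finset.mem_image.2 ⟨k1, hk1, rfl⟩) (Finset.mem_image.2 ⟨k2, hk2, rfl⟩)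
                  ?_ ?_ ?_
                · intro h
                  exact huv (by rw [hu1, hv2, castinj h])
                · push_cast
                  rw [← hu1, ← hv2]; exact h1
                · push_cast
                  rw [← hu1, ← hv2]; exact h2
            · -- hv v = 0 and Wv v = 0 : impossible
              obtain ⟨k, hk, hvk⟩ := hv_eq_zero_iff.1 hh1
              rw [hvk] at hW2 hh1
              have : Wv d (k:ℂ) = -(gv d (k:ℂ) * hdv d (k:ℂ)) := by
                rw [Wv, hh1]; ring
              rw [this] at hW2
              exact absurd (neg_eq_zero.1 hW2) (mul_ne_zero (gv_at_B hk) (hdv_at_B hk))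
        · -- Wv u = 0
          rcases mul_eq_zero.1 hJ2 with hgh2 | hW2
          · rcases mul_eq_zero.1 hgh2 with hg2 | hh2
            · -- gv u = 0 and Wv u = 0 : impossible
              obtain ⟨k, hk, huk⟩ := gv_eq_zero_iff.1 hg2
              rw [huk] at hW1 hg2
              have : Wv d (k:ℂ) = gdv d (k:ℂ) * hv d (k:ℂ) := by
                rw [Wv, hg2]; ring
              rw [this] at hW1
              exact absurd hW1 (mul_ne_zero (gdv_at_A hk) (hv_at_A hk))
            · -- hv u = 0 and Wv u = 0 : impossible
              obtain ⟨k, hk, huk⟩ := hv_eq_zero_iff.1 hh2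
              rw [huk] at hW1 hh2
              have : Wv d (k:ℂ) = -(gv d (k:ℂ) * hdv d (k:ℂ)) := by
                rw [Wv, hh2]; ring
              rw [this] at hW1
              exact absurd (neg_eq_zero.1 hW1) (mul_ne_zero (gv_at_B hk) (hdv_at_B hk))
          · -- both roots of W : T pair
            obtain ⟨r1, hr1, hur⟩ := (hTiff u).1 hW1
            obtain ⟨r2, hr2, hvr⟩ := (hTiff v).1 hW2
            refine mem_helper x y T hsubT r1 r2 hr1 hr2 ?_ ?_ ?_
            · intro h
              exact huv (by rw [hur, hvr, h])
            · rw [show ((r1:ℝ):ℂ) = u from hur.symm, show ((r2:ℝ):ℂ) = v from hvr.symm]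
              exact h1
            · rw [show ((r1:ℝ):ℂ) = u from hur.symm, show ((r2:ℝ):ℂ) = v from hvr.symm]
              exact h2
    · -- backward direction
      intro hmem
      obtain ⟨zz, hzT, hz⟩ := Finset.mem_image.1 hmem
      obtain ⟨r1, r2⟩ := zz
      have hlt : r1 < r2 := hTAll_lt _ hzT
      obtain ⟨hx, hy⟩ := Prod.ext_iff.1 hz
      simp only [mmap] at hx hy
      set u : ℂ := ((r1:ℝ):ℂ) with hu
      set v : ℂ := ((r2:ℝ):ℂ) with hv'
      have hne : u ≠ v := by
        rw [hu, hv']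
        intro h
        exact absurd (Complex.ofReal_injective h) (ne_of_lt hlt)
      have h2 : u * v = SS d * x := by
        rw [← hx, mul_div_cancel₀ _ (SS_ne d)]
      have h1 : u + v = SS d + x - y := by
        rw [← hy, ← hx]
        ring
      have hp := eval_pPoly d h1 h2
      have hq := eval_qPoly d h1 h2
      -- facts per case
      rw [hTAll, Finset.mem_union, Finset.mem_union] at hzT
      have main : (gv d v * hv d v * Wv d u = 0) ∧ (gv d u * hv d u * Wv d v = 0) ∧
          ¬(eval ![x, y] (pPoly d) = 0 ∧ eval ![x, y] (qPoly d) = 0) := by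
        rcases hzT with (hzT | hzT) | hzT
        · -- GA pair
          obtain ⟨hm1, hm2, -⟩ := mem_pairsLT.1 hzT
          obtain ⟨k1, hk1, hk1e⟩ := Finset.mem_image.1 hm1
          obtain ⟨k2, hk2, hk2e⟩ := Finset.mem_image.1 hm2
          have hk1e : (k1:ℝ) = r1 := hk1e
          have hk2e : (k2:ℝ) = r2 := hk2e
          have hgu : gv d u = 0 := by
            rw [hu, ← hk1e]; push_cast; exact gv_int_zero hk1
          have hgv : gv d v = 0 := by
            rw [hv', ← hk2e]; push_cast; exact gv_int_zero hk2
          have hhu : hv d u ≠ 0 := by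
            rw [hu, ← hk1e]; push_cast; exact hv_at_A hk1
          have hhv : hv d v ≠ 0 := by
            rw [hv', ← hk2e]; push_cast; exact hv_at_A hk2
          refine ⟨by rw [hgv]; ring, by rw [hgu]; ring, fun hc => ?_⟩
          rw [hq] at hc
          exact (mul_ne_zero hhu hhv) hc.2
        · -- GB pair
          obtain ⟨hm1, hm2, -⟩ := mem_pairsLT.1 hzT
          obtain ⟨k1, hk1, hk1e⟩ := Finset.mem_image.1 hm1
          obtain ⟨k2, hk2, hk2e⟩ := Finset.mem_image.1 hm2
          have hk1e : (k1:ℝ) = r1 := hk1e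
          have hk2e : (k2:ℝ) = r2 := hk2e
          have hhu : hv d u = 0 := by
            rw [hu, ← hk1e]; push_cast; exact hv_int_zero hk1
          have hhv : hv d v = 0 := by
            rw [hv', ← hk2e]; push_cast; exact hv_int_zero hk2
          have hgu : gv d u ≠ 0 := by
            rw [hu, ← hk1e]; push_cast; exact gv_at_B hk1
          have hgv : gv d v ≠ 0 := by
            rw [hv', ← hk2e]; push_cast; exact gv_at_B hk2
          refine ⟨by rw [hhv]; ring, by rw [hhu]; ring, fun hc => ?_⟩
          rw [hp] at hc
          exact (mul_ne_zero hgu hgv) hc.1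
        · -- T pair
          obtain ⟨hm1, hm2, -⟩ := mem_pairsLT.1 hzT
          have hWu : Wv d u = 0 := (hTiff u).2 ⟨r1, hm1, hu⟩
          have hWv : Wv d v = 0 := (hTiff v).2 ⟨r2, hm2, hv'⟩
          have hgu : gv d u ≠ 0 := hu ▸ hgvT r1 hm1
          have hgv : gv d v ≠ 0 := hv' ▸ hgvT r2 hm2
          refine ⟨by rw [hWu]; ring, by rw [hWv]; ring, fun hc => ?_⟩
          rw [hp] at hc
          exact (mul_ne_zero hgu hgv) hc.1
      obtain ⟨hz1, hz2, hPQ⟩ := main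
      have hj1 := J1 d h1 h2
      have hj2 := J2 d h1 h2
      have hj1' : v * eval ![x,y] (qPoly d * pderiv (0:Fin 2) (pPoly d) - pPoly d * pderiv (0:Fin 2) (qPoly d))
          - (SS d - v) * eval ![x,y] (qPoly d * pderiv (1:Fin 2) (pPoly d) - pPoly d * pderiv (1:Fin 2) (qPoly d)) = 0 := by
        rw [hj1]
        linear_combination (SS d) * hz1
      have hj2' : u * eval ![x,y] (qPoly d * pderiv (0:Fin 2) (pPoly d) - pPoly d * pderiv (0:Fin 2) (qPoly d))
          - (SS d - u) * eval ![x,y] (qPoly d * pderiv (1:Fin 2) (pPoly d) - pPoly d * pderiv (1:Fin 2) (qPoly d)) = 0 := by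
        rw [hj2]
        linear_combination (SS d) * hz2
      have hvu : SS d * (v - u) ≠ 0 := mul_ne_zero (SS_ne d) (sub_ne_zero.2 (Ne.symm hne))
      have hA0 : SS d * (v - u) * eval ![x,y] (qPoly d * pderiv (0:Fin 2) (pPoly d) - pPoly d * pderiv (0:Fin 2) (qPoly d)) = 0 := by
        linear_combination (SS d - u)*hj1' - (SS d - v)*hj2'
      have hB0 : SS d * (v - u) * eval ![x,y] (qPoly d * pderiv (1:Fin 2) (pPoly d) - pPoly d * pderiv (1:Fin 2) (qPoly d)) = 0 := by
        linear_combination u*hj1' - v*hj2'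
      exact ⟨hPQ, (mul_eq_zero.1 hA0).resolve_left hvu, (mul_eq_zero.1 hB0).resolve_left hvu⟩
  rw [hseteq, Set.ncard_coe_finset, hScard]
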